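/- For any graph G = (V,E), h₁(B₀(G)) = (1/2)·φ(Ḡ), where Ḡ denotes the complement of G. -/

import Mathlib

open Finset Matrix

variable {V : Type*} [Fintype V] [DecidableEq V]

/-- The trace inner product `⟨A,B⟩ = ∑_{i,j} A_{ij} B_{ij}` of two matrices. -/
noncomputable def ip (A B : Matrix V V ℝ) : ℝ := ∑ i, ∑ j, A i j * B i j

/-- The matrix `C` associated to the bipartition `(P, Pᶜ)`: entry `1/2` whenever the two
indices lie on opposite sides of the bipartition, and `0` otherwise. -/
noncomputable def Cmat (P : Finset V) : Matrix V V ℝ :=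
  Matrix.of fun i j => if (i ∈ P ↔ j ∈ P) then 0 else 1/2

/-- The `(1+|V|)×(1+|V|)` block matrix `[[1, xᵀ],[x, X]]`. -/
noncomputable def dblk (x : V → ℝ) (X : Matrix V V ℝ) : Matrix (Unit ⊕ V) (Unit ⊕ V) ℝ :=
  Matrix.fromBlocks 1 (Matrix.of fun _ j => x j) (Matrix.of fun i _ => x i) X

/-- The semidefinite programming bound `h₁(G)` for a bipartite graph `G` with
bipartition `(P, Pᶜ)`. -/
noncomputable def h1 (G : SimpleGraph V) (P : Finset V) : ℝ :=
  sSup {x : ℝ | ∃ X : Matrix V V ℝ, X.PosSemidef ∧ X.trace = 1 ∧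
    (∀ i j, G.Adj i j → X i j = 0) ∧ x = ip (Cmat P) X}

/-- The semidefinite programming bound `g₁(G)` for a bipartite graph `G` with
bipartition `(P, Pᶜ)`. -/
noncomputable def g1 (G : SimpleGraph V) (P : Finset V) : ℝ :=
  sSup {x : ℝ | ∃ X : Matrix V V ℝ, (dblk (fun i => X i i) X).PosSemidef ∧
    (∀ i j, G.Adj i j → X i j = 0) ∧ x = ip (Cmat P) X}

/-- The adjacency matrix of a graph is Hermitian (over `ℝ`). -/
lemma adjHerm (G : SimpleGraph V) [DecidableRel G.Adj] : (G.adjMatrix ℝ).IsHermitian := by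
  rw [Matrix.IsHermitian, Matrix.conjTranspose_eq_transpose_of_trivial]
  exact G.isSymm_adjMatrix

/-- The list of eigenvalues of a Hermitian matrix, with multiplicities,
sorted in nondecreasing order. -/
noncomputable def eigList (A : Matrix V V ℝ) (hA : A.IsHermitian) : List ℝ :=
  (Finset.univ.val.map hA.eigenvalues).sort (· ≤ ·)

/-- The second largest eigenvalue (with multiplicities) of a Hermitian matrix. -/
noncomputable def secondLargest (A : Matrix V V ℝ) (hA : A.IsHermitian) : ℝ :=
  (eigList A hA).getD (Fintype.card V - 2) 0

/-- The smallest eigenvalue of a Hermitian matrix. -/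
noncomputable def smallestEig (A : Matrix V V ℝ) (hA : A.IsHermitian) : ℝ :=
  (eigList A hA).getD 0 0

/-- A graph is edge-transitive if its automorphism group acts transitively on edges. -/
def EdgeTransitive (G : SimpleGraph V) : Prop :=
  ∀ e f : G.edgeSet, ∃ φ : G ≃g G, φ.mapEdgeSet e = f

/-- A graph is vertex-transitive if its automorphism group acts transitively on vertices. -/
def VertexTransitive (G : SimpleGraph V) : Prop :=
  ∀ u v : V, ∃ φ : G ≃g G, φ u = v

/-- The extended bipartite double `B₀(G)` of a graph `G`: vertex set `V ⊕ V`,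
with `inl i` adjacent to `inr j` iff `G.Adj i j` or `i = j`. -/
def extBipDouble (G : SimpleGraph V) : SimpleGraph (V ⊕ V) where
  Adj x y := (∃ i j, x = Sum.inl i ∧ y = Sum.inr j ∧ (G.Adj i j ∨ i = j)) ∨
             (∃ i j, x = Sum.inr j ∧ y = Sum.inl i ∧ (G.Adj i j ∨ i = j))
  symm := by
    constructor
    rintro x y (⟨i, j, rfl, rfl, hij⟩ | ⟨i, j, rfl, rfl, hij⟩)
    · exact Or.inr ⟨i, j, rfl, rfl, hij⟩
    · exact Or.inl ⟨i, j, rfl, rfl, hij⟩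
  loopless := by
    constructor
    rintro x (⟨i, j, h1, h2, _⟩ | ⟨i, j, h1, h2, _⟩) <;> subst h1 <;> simp_all

/-- The left side of the bipartition of `V ⊕ V`. -/
def leftPart (V : Type*) [Fintype V] [DecidableEq V] : Finset (V ⊕ V) :=
  Finset.univ.filter (fun x => x.isLeft)

/-- Haemers' spectral parameter `φ(F)`: the minimum of the largest absolute value of an
eigenvalue of a real symmetric matrix `M` with `M_{ij} = 1` for all edges `{i,j}` of `F`. -/
noncomputable def phi (F : SimpleGraph V) : ℝ :=
  sInf {x : ℝ | ∃ (M : Matrix V V ℝ) (hM : M.IsHermitian),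
    (∀ i j, F.Adj i j → M i j = 1) ∧ x = sSup {y : ℝ | ∃ i, y = |hM.eigenvalues i|}}

open Filter Topology

set_option maxHeartbeats 1000000
set_option linter.unusedSectionVars false

section Helpers
variable {ι : Type*} [Fintype ι] [DecidableEq ι]

lemma herm_apply {M : Matrix ι ι ℝ} (h : M.IsHermitian) (x y : ι) : M x y = M y x := by
  conv_lhs => rw [← h]
  simp [Matrix.conjTranspose_apply]

lemma dot_mulVec_expand (A : Matrix ι ι ℝ) (w v : ι → ℝ) :
    w ⬝ᵥ (A *ᵥ v) = ∑ x, ∑ y, A x y * (w x * v y) := by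
  simp only [dotProduct, mulVec, Finset.mul_sum]
  exact Finset.sum_congr rfl fun x _ => Finset.sum_congr rfl fun y _ => by ring

lemma psd_quad {X : Matrix ι ι ℝ} (hX : X.PosSemidef) (x y : ι) (a b : ℝ) :
    0 ≤ a * a * X x x + a * b * X x y + a * b * X y x + b * b * X y y := by
  have h := hX.dotProduct_mulVec_nonneg (Pi.single x a + Pi.single y b)
  simp only [star_trivial, Matrix.mulVec_add, Matrix.mulVec_single, dotProduct_add,
    add_dotProduct, single_dotProduct] at h
  simp only [Pi.smul_apply, Matrix.col_apply, op_smul_eq_mul] at h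
  nlinarith [h]

lemma psd_diag_nonneg {X : Matrix ι ι ℝ} (hX : X.PosSemidef) (x : ι) : 0 ≤ X x x := by
  have := psd_quad hX x x 1 0
  simpa using this

lemma psd_diag_le_trace {X : Matrix ι ι ℝ} (hX : X.PosSemidef) (x : ι) : X x x ≤ X.trace := by
  rw [Matrix.trace]
  exact Finset.single_le_sum (fun z _ => psd_diag_nonneg hX z) (Finset.mem_univ x)

lemma psd_entry_abs_le_trace {X : Matrix ι ι ℝ} (hX : X.PosSemidef) (x y : ι) :
    |X x y| ≤ X.trace := by
  have hsym := herm_apply hX.1 x y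
  have h1 := psd_quad hX x y 1 1
  have h2 := psd_quad hX x y 1 (-1)
  have hx := psd_diag_le_trace hX x
  have hy := psd_diag_le_trace hX y
  have hx0 := psd_diag_nonneg hX x
  have hy0 := psd_diag_nonneg hX y
  rw [abs_le]
  constructor <;> nlinarith [psd_diag_nonneg hX x, psd_diag_nonneg hX y]

lemma psd_smul {X : Matrix ι ι ℝ} (hX : X.PosSemidef) {r : ℝ} (hr : 0 ≤ r) :
    (r • X).PosSemidef := by
  refine Matrix.PosSemidef.of_dotProduct_mulVec_nonneg ?_ fun w => ?_
  · rw [Matrix.IsHermitian, Matrix.conjTranspose_smul, hX.1]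
    simp
  · rw [Matrix.smul_mulVec, dotProduct_smul]
    exact smul_nonneg hr (hX.dotProduct_mulVec_nonneg w)

lemma psd_outer (w : ι → ℝ) : (Matrix.of fun x y => w x * w y : Matrix ι ι ℝ).PosSemidef := by
  refine Matrix.PosSemidef.of_dotProduct_mulVec_nonneg ?_ fun v => ?_
  · ext x y
    simp [Matrix.conjTranspose_apply, mul_comm]
  · have hs : star v = v := funext fun x => star_trivial (v x)
    rw [hs, dot_mulVec_expand]
    have : ∑ x, ∑ y, (Matrix.of fun x y => w x * w y : Matrix ι ι ℝ) x y * (v x * v y)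
        = (∑ x, v x * w x) * (∑ y, v y * w y) := by
      rw [Finset.sum_mul]
      exact Finset.sum_congr rfl fun x _ => by
        rw [Finset.mul_sum]
        exact Finset.sum_congr rfl fun y _ => by simp [Matrix.of_apply]; ring
    rw [this]
    exact mul_self_nonneg _

lemma ip_sub (A B X : Matrix ι ι ℝ) : ip (A - B) X = ip A X - ip B X := by
  simp [ip, Matrix.sub_apply, sub_mul, Finset.sum_sub_distrib]

lemma ip_add (A B X : Matrix ι ι ℝ) : ip (A + B) X = ip A X + ip B X := by
  simp [ip, Matrix.add_apply, add_mul, Finset.sum_add_distrib]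

lemma ip_smul (r : ℝ) (A X : Matrix ι ι ℝ) : ip (r • A) X = r * ip A X := by
  simp only [ip, Matrix.smul_apply, smul_eq_mul, Finset.mul_sum]
  exact Finset.sum_congr rfl fun x _ => Finset.sum_congr rfl fun y _ => by ring

lemma ip_one (X : Matrix ι ι ℝ) : ip 1 X = X.trace := by
  simp only [ip, Matrix.one_apply, ite_mul, one_mul, zero_mul, Finset.sum_ite_eq, Finset.mem_univ,
    if_true]
  rfl

lemma ip_quad (A : Matrix ι ι ℝ) (w : ι → ℝ) :
    ip A (Matrix.of fun x y => w x * w y) = w ⬝ᵥ (A *ᵥ w) := by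
  rw [dot_mulVec_expand, ip]
  exact Finset.sum_congr rfl fun x _ => Finset.sum_congr rfl fun y _ => by
    simp [Matrix.of_apply]

lemma ip_psd_psd {Y X : Matrix ι ι ℝ} (hY : Y.PosSemidef) (hX : X.PosSemidef) :
    0 ≤ ip Y X := by
  obtain ⟨B, rfl⟩ : ∃ B : Matrix ι ι ℝ, X = Bᴴ * B := by
    open scoped MatrixOrder in
    obtain ⟨B, hB⟩ := CStarAlgebra.nonneg_iff_eq_star_mul_self.mp hX.nonneg
    exact ⟨B, hB⟩
  have h : ip Y (Bᴴ * B) = ∑ k, (fun x => B k x) ⬝ᵥ (Y *ᵥ fun y => B k y) := by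
    calc ip Y (Bᴴ * B) = ∑ x, ∑ y, ∑ k, Y x y * (B k x * B k y) := by
          simp only [ip, Matrix.mul_apply, Matrix.conjTranspose_apply, star_trivial,
            Finset.mul_sum]
      _ = ∑ x, ∑ k, ∑ y, Y x y * (B k x * B k y) :=
          Finset.sum_congr rfl fun x _ => Finset.sum_comm
      _ = ∑ k, ∑ x, ∑ y, Y x y * (B k x * B k y) := Finset.sum_comm
      _ = ∑ k, (fun x => B k x) ⬝ᵥ (Y *ᵥ fun y => B k y) := by
          refine Finset.sum_congr rfl fun k _ => ?_
          rw [dot_mulVec_expand]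
          try exact Finset.sum_congr rfl fun x _ => Finset.sum_congr rfl fun y _ => by ring
  rw [h]
  refine Finset.sum_nonneg fun k _ => ?_
  simpa using hY.dotProduct_mulVec_nonneg fun y => B k y

lemma rayleigh_abs_le {M : Matrix ι ι ℝ} (hM : M.IsHermitian) {lam : ℝ}
    (hlam : ∀ k, |hM.eigenvalues k| ≤ lam) (v : ι → ℝ) :
    |v ⬝ᵥ (M *ᵥ v)| ≤ lam * (v ⬝ᵥ v) := by
  set U : Matrix ι ι ℝ := (hM.eigenvectorUnitary : Matrix ι ι ℝ) with hU
  set c : ι → ℝ := (star U) *ᵥ v with hc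
  have hUU : U * star U = 1 := Matrix.mem_unitaryGroup_iff.mp hM.eigenvectorUnitary.2
  have hvU : v ᵥ* U = c := by
    rw [hc, ← Matrix.mulVec_transpose, ← Matrix.conjTranspose_eq_transpose_of_trivial]
    rfl
  have hq : v ⬝ᵥ (M *ᵥ v) = ∑ k, hM.eigenvalues k * (c k * c k) := by
    conv_lhs => rw [hM.spectral_theorem, Unitary.conjStarAlgAut_apply]
    rw [← hU, ← Matrix.mulVec_mulVec, ← Matrix.mulVec_mulVec, Matrix.dotProduct_mulVec v U, hvU,
      ← hc]
    simp only [dotProduct, Matrix.mulVec_diagonal, RCLike.ofReal_real_eq_id, Function.comp_apply,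
      id_eq]
    exact Finset.sum_congr rfl fun k _ => by ring
  have hcc : c ⬝ᵥ c = v ⬝ᵥ v := by
    have h1 : U *ᵥ c = v := by
      rw [hc, Matrix.mulVec_mulVec, hUU, Matrix.one_mulVec]
    have h2 : v ⬝ᵥ (U *ᵥ c) = c ⬝ᵥ c := by rw [Matrix.dotProduct_mulVec v U, hvU]
    rw [h1] at h2
    exact h2.symm
  rw [hq, ← hcc]
  calc |∑ k, hM.eigenvalues k * (c k * c k)| ≤ ∑ k, |hM.eigenvalues k * (c k * c k)| :=
        Finset.abs_sum_le_sum_abs _ _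
    _ ≤ ∑ k, lam * (c k * c k) := by
        refine Finset.sum_le_sum fun k _ => ?_
        have habs : |c k * c k| = c k * c k := abs_of_nonneg (mul_self_nonneg _)
        rw [abs_mul, habs]
        exact mul_le_mul_of_nonneg_right (hlam k) (mul_self_nonneg _)
    _ = lam * (c ⬝ᵥ c) := by rw [dotProduct, Finset.mul_sum]

lemma ip_zero (A : Matrix ι ι ℝ) : ip A 0 = 0 := by simp [ip]

end Helpers

section GraphHelpers
variable {V : Type*} [Fintype V] [DecidableEq V]
lemma Cmat_ll (i j : V) : Cmat (leftPart V) (Sum.inl i) (Sum.inl j) = 0 := by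
  simp [Cmat, leftPart]
lemma Cmat_rr (i j : V) : Cmat (leftPart V) (Sum.inr i) (Sum.inr j) = 0 := by
  simp [Cmat, leftPart]
lemma Cmat_lr (i j : V) : Cmat (leftPart V) (Sum.inl i) (Sum.inr j) = 1/2 := by
  simp [Cmat, leftPart]
lemma Cmat_rl (i j : V) : Cmat (leftPart V) (Sum.inr i) (Sum.inl j) = 1/2 := by
  simp [Cmat, leftPart]
lemma Cmat_diag' (x : V ⊕ V) : Cmat (leftPart V) x x = 0 := by simp [Cmat]
lemma adj_def (G : SimpleGraph V) (x y : V ⊕ V) : (extBipDouble G).Adj x y ↔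
    ((∃ i j, x = Sum.inl i ∧ y = Sum.inr j ∧ (G.Adj i j ∨ i = j)) ∨
     (∃ i j, x = Sum.inr j ∧ y = Sum.inl i ∧ (G.Adj i j ∨ i = j))) := Iff.rfl
lemma adj_lr {G : SimpleGraph V} {i j : V} :
    (extBipDouble G).Adj (Sum.inl i) (Sum.inr j) ↔ (G.Adj i j ∨ i = j) := by
  rw [adj_def]; simp
lemma adj_rl {G : SimpleGraph V} {i j : V} :
    (extBipDouble G).Adj (Sum.inr i) (Sum.inl j) ↔ (G.Adj j i ∨ j = i) := by
  rw [adj_def]; simp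
lemma not_adj_ll {G : SimpleGraph V} (i j : V) :
    ¬ (extBipDouble G).Adj (Sum.inl i) (Sum.inl j) := by
  rw [adj_def]; simp
lemma not_adj_rr {G : SimpleGraph V} (i j : V) :
    ¬ (extBipDouble G).Adj (Sum.inr i) (Sum.inr j) := by
  rw [adj_def]; simp
lemma ip_split (A X : Matrix (V ⊕ V) (V ⊕ V) ℝ) :
    ip A X = ((∑ i, ∑ j, A (Sum.inl i) (Sum.inl j) * X (Sum.inl i) (Sum.inl j))
      + (∑ i, ∑ j, A (Sum.inl i) (Sum.inr j) * X (Sum.inl i) (Sum.inr j)))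
      + ((∑ i, ∑ j, A (Sum.inr i) (Sum.inl j) * X (Sum.inr i) (Sum.inl j))
      + (∑ i, ∑ j, A (Sum.inr i) (Sum.inr j) * X (Sum.inr i) (Sum.inr j))) := by
  rw [ip, Fintype.sum_sum_type]
  simp only [Fintype.sum_sum_type]
  rw [Finset.sum_add_distrib, Finset.sum_add_distrib]

lemma weak_bound (G : SimpleGraph V) {M : Matrix V V ℝ} (hM : M.IsHermitian)
    (hMe : ∀ i j, Gᶜ.Adj i j → M i j = 1) {lam : ℝ}
    (hlam : ∀ k, |hM.eigenvalues k| ≤ lam)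
    {X : Matrix (V ⊕ V) (V ⊕ V) ℝ} (hX : X.PosSemidef) (htr : X.trace = 1)
    (hXe : ∀ x y, (extBipDouble G).Adj x y → X x y = 0) :
    ip (Cmat (leftPart V)) X ≤ lam / 2 := by
  classical
  set T : Matrix (V ⊕ V) (V ⊕ V) ℝ := Matrix.of fun x y =>
    match x, y with
    | Sum.inl i, Sum.inr j => M i j
    | Sum.inr i, Sum.inl j => M j i
    | _, _ => 0 with hT
  have hT1 : ∀ i j, T (Sum.inl i) (Sum.inl j) = 0 := fun _ _ => rfl
  have hT2 : ∀ i j, T (Sum.inl i) (Sum.inr j) = M i j := fun _ _ => rfl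
  have hT3 : ∀ i j, T (Sum.inr i) (Sum.inl j) = M j i := fun _ _ => rfl
  have hT4 : ∀ i j, T (Sum.inr i) (Sum.inr j) = 0 := fun _ _ => rfl
  have hsym : ∀ i j, M i j = M j i := herm_apply hM
  have h2ab : ∀ a b : V → ℝ, 2 * (a ⬝ᵥ (M *ᵥ b)) ≤ lam * (a ⬝ᵥ a + b ⬝ᵥ b) := by
    intro a b
    have hba : b ⬝ᵥ (M *ᵥ a) = a ⬝ᵥ (M *ᵥ b) := by
      rw [dot_mulVec_expand, dot_mulVec_expand, Finset.sum_comm]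
      exact Finset.sum_congr rfl fun x _ => Finset.sum_congr rfl fun y _ => by
        rw [hsym y x]; ring
    have h1 := (abs_le.mp (rayleigh_abs_le hM hlam (a + b))).2
    have h2 := (abs_le.mp (rayleigh_abs_le hM hlam (a - b))).1
    simp only [Matrix.mulVec_add, Matrix.mulVec_sub, dotProduct_add, dotProduct_sub,
      add_dotProduct, sub_dotProduct] at h1 h2
    rw [hba] at h1 h2
    linarith
  have hThm : T.IsHermitian := by
    ext x y
    rw [Matrix.conjTranspose_apply, star_trivial]
    rcases x with i | i <;> rcases y with j | j
    · rfl
    · rw [hT2, hT3, hsym i j]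
    · rw [hT3, hT2, hsym j i]
    · rfl
  have hYpsd : (lam • (1 : Matrix (V ⊕ V) (V ⊕ V) ℝ) - T).PosSemidef := by
    refine Matrix.PosSemidef.of_dotProduct_mulVec_nonneg ?_ ?_
    · have h1 : (lam • (1 : Matrix (V ⊕ V) (V ⊕ V) ℝ)).IsHermitian := by
        rw [Matrix.IsHermitian, Matrix.conjTranspose_smul, Matrix.conjTranspose_one]
        simp
      exact h1.sub hThm
    · intro w
      have hs : star w = w := funext fun x => star_trivial _
      rw [hs]
      set a : V → ℝ := fun i => w (Sum.inl i) with ha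
      set b : V → ℝ := fun i => w (Sum.inr i) with hb
      have hTw : w ⬝ᵥ (T *ᵥ w) = 2 * (a ⬝ᵥ (M *ᵥ b)) := by
        rw [dot_mulVec_expand, Fintype.sum_sum_type]
        simp only [Fintype.sum_sum_type, hT1, hT2, hT3, hT4, zero_mul,
          Finset.sum_const_zero, zero_add, add_zero]
        have hswap : ∑ i, ∑ j, M j i * (w (Sum.inr i) * w (Sum.inl j))
            = ∑ i, ∑ j, M i j * (w (Sum.inl i) * w (Sum.inr j)) := by
          rw [Finset.sum_comm]
          exact Finset.sum_congr rfl fun x _ => Finset.sum_congr rfl fun y _ => by ring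
        rw [hswap, dot_mulVec_expand, two_mul]
      have hq : w ⬝ᵥ ((lam • (1 : Matrix (V ⊕ V) (V ⊕ V) ℝ) - T) *ᵥ w)
          = lam * (a ⬝ᵥ a + b ⬝ᵥ b) - 2 * (a ⬝ᵥ (M *ᵥ b)) := by
        rw [Matrix.sub_mulVec, dotProduct_sub, hTw]
        congr 1
        rw [Matrix.smul_mulVec, Matrix.one_mulVec, dotProduct_smul, smul_eq_mul]
        congr 1
        rw [dotProduct, Fintype.sum_sum_type]
        rfl
      rw [hq]
      linarith [h2ab a b]
  have hnn := ip_psd_psd hYpsd hX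
  have hsplit : ip (lam • (1 : Matrix (V ⊕ V) (V ⊕ V) ℝ) - T) X = lam * X.trace - ip T X := by
    rw [ip_sub, ip_smul, ip_one]
  have hTX : ip T X = 2 * ip (Cmat (leftPart V)) X := by
    rw [ip_split, ip_split]
    have hlr : ∀ i j, T (Sum.inl i) (Sum.inr j) * X (Sum.inl i) (Sum.inr j)
        = X (Sum.inl i) (Sum.inr j) := by
      intro i j
      by_cases h : G.Adj i j ∨ i = j
      · rw [hXe _ _ (adj_lr.mpr h), mul_zero]
      · push_neg at h
        rw [hT2, hMe i j (by rw [SimpleGraph.compl_adj]; exact ⟨h.2, h.1⟩), one_mul]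
    have hrl : ∀ i j, T (Sum.inr i) (Sum.inl j) * X (Sum.inr i) (Sum.inl j)
        = X (Sum.inr i) (Sum.inl j) := by
      intro i j
      by_cases h : G.Adj j i ∨ j = i
      · rw [hXe _ _ (adj_rl.mpr h), mul_zero]
      · push_neg at h
        rw [hT3, hMe j i (by rw [SimpleGraph.compl_adj]; exact ⟨h.2, h.1⟩), one_mul]
    simp only [hT1, hT4, zero_mul, Finset.sum_const_zero, zero_add, add_zero]
    simp only [hlr, hrl, Cmat_ll, Cmat_rr, Cmat_lr, Cmat_rl, zero_mul,
      Finset.sum_const_zero, zero_add, add_zero]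
    rw [mul_add]
    congr 1 <;> · rw [Finset.mul_sum]
                  refine Finset.sum_congr rfl fun i _ => ?_
                  rw [Finset.mul_sum]
                  exact Finset.sum_congr rfl fun j _ => by ring
  rw [hsplit, htr, hTX] at hnn
  linarith


end GraphHelpers

section Strong
variable {V : Type*} [Fintype V] [DecidableEq V]

lemma ip_smul_right {ι : Type*} [Fintype ι] (A X : Matrix ι ι ℝ) (r : ℝ) :
    ip A (r • X) = r * ip A X := by
  simp only [ip, Matrix.smul_apply, smul_eq_mul, Finset.mul_sum]
  exact Finset.sum_congr rfl fun x _ => Finset.sum_congr rfl fun y _ => by ring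

lemma trace_outer {ι : Type*} [Fintype ι] (w : ι → ℝ) :
    (Matrix.of fun x y => w x * w y : Matrix ι ι ℝ).trace = w ⬝ᵥ w := by
  simp [Matrix.trace, Matrix.diag, dotProduct]

lemma strong_bound (G : SimpleGraph V) [Nonempty V] (h ε : ℝ) (hh0 : 0 ≤ h) (hε : 0 < ε)
    (hub : ∀ X : Matrix (V ⊕ V) (V ⊕ V) ℝ, X.PosSemidef → X.trace = 1 →
      (∀ x y, (extBipDouble G).Adj x y → X x y = 0) → ip (Cmat (leftPart V)) X ≤ h) :
    ∃ (M : Matrix V V ℝ) (hM : M.IsHermitian),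
      (∀ i j, Gᶜ.Adj i j → M i j = 1) ∧ ∀ k, |hM.eigenvalues k| ≤ 2 * (h + ε) := by
  classical
  set C : Matrix (V ⊕ V) (V ⊕ V) ℝ := Cmat (leftPart V) with hCdef
  set e : Matrix (V ⊕ V) (V ⊕ V) ℝ → ℝ × ((V ⊕ V) → (V ⊕ V) → ℝ) × ℝ := fun X =>
    (X.trace - 1, fun x y => if (extBipDouble G).Adj x y then X x y else 0, ip C X) with he
  set U : Set (ℝ × ((V ⊕ V) → (V ⊕ V) → ℝ) × ℝ) := e '' {X | X.PosSemidef} with hUdef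
  set p : ℝ × ((V ⊕ V) → (V ⊕ V) → ℝ) × ℝ := (0, 0, h + ε) with hp
  -- p is not in the closure of U
  have hpcl : p ∉ closure U := by
    intro hcl
    rw [mem_closure_iff_seq_limit] at hcl
    obtain ⟨uq, huU, hlim⟩ := hcl
    choose Xs hXpsd hXeq using huU
    have huq : ∀ n, uq n = e (Xs n) := fun n => (hXeq n).symm
    have h1 : Tendsto (fun n => (Xs n).trace - 1) atTop (𝓝 (0 : ℝ)) := by
      have := (continuous_fst.tendsto p).comp hlim
      simpa [huq, Function.comp_def, he] using this
    have htr : Tendsto (fun n => (Xs n).trace) atTop (𝓝 (1 : ℝ)) := by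
      have := h1.add (tendsto_const_nhds (α := ℕ) (x := (1 : ℝ)))
      simpa using this
    have hmask : Tendsto (fun n => (fun x y => if (extBipDouble G).Adj x y then Xs n x y else 0))
        atTop (𝓝 (0 : (V ⊕ V) → (V ⊕ V) → ℝ)) := by
      have h1 := (continuous_snd.tendsto p).comp hlim
      have h2 := (continuous_fst.tendsto (p.2)).comp h1
      simpa [huq, Function.comp_def, he] using h2
    have hval : Tendsto (fun n => ip C (Xs n)) atTop (𝓝 (h + ε)) := by
      have h1 := (continuous_snd.tendsto p).comp hlim
      have h2 := (continuous_snd.tendsto (p.2)).comp h1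
      simpa [huq, Function.comp_def, he] using h2
    set Ys : ℕ → ((V ⊕ V) → (V ⊕ V) → ℝ) := fun n => fun x y => Xs n x y with hYs
    have hev : ∀ᶠ n in atTop, Ys n ∈ Metric.closedBall (0 : (V ⊕ V) → (V ⊕ V) → ℝ) 2 := by
      filter_upwards [htr.eventually_lt_const (show (1:ℝ) < 2 by norm_num)] with n hn
      rw [Metric.mem_closedBall, dist_zero_right,
        pi_norm_le_iff_of_nonneg (by norm_num : (0:ℝ) ≤ 2)]
      intro x
      rw [pi_norm_le_iff_of_nonneg (by norm_num : (0:ℝ) ≤ 2)]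
      intro y
      rw [Real.norm_eq_abs]
      exact (psd_entry_abs_le_trace (hXpsd n) x y).trans hn.le
    obtain ⟨A', -, φ, hφ, hA⟩ := tendsto_subseq_of_frequently_bounded
      Metric.isBounded_closedBall hev.frequently
    set A : Matrix (V ⊕ V) (V ⊕ V) ℝ := Matrix.of A' with hAdef
    have hent : ∀ x y, Tendsto (fun n => Xs (φ n) x y) atTop (𝓝 (A x y)) := by
      intro x y
      have h1 := tendsto_pi_nhds.mp hA x
      exact tendsto_pi_nhds.mp h1 y
    have hφt : Tendsto φ atTop atTop := hφ.tendsto_atTop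
    have hApsd : A.PosSemidef := by
      refine Matrix.PosSemidef.of_dotProduct_mulVec_nonneg ?_ ?_
      · ext x y
        rw [Matrix.conjTranspose_apply, star_trivial]
        refine tendsto_nhds_unique ?_ (hent x y)
        have heq : (fun n => Xs (φ n) y x) = fun n => Xs (φ n) x y :=
          funext fun n => herm_apply (hXpsd (φ n)).1 y x
        rw [← heq]
        exact hent y x
      · intro w
        have hs : star w = w := funext fun x => star_trivial _
        rw [hs, dot_mulVec_expand]
        have hlimq : Tendsto (fun n => ∑ x, ∑ y, Xs (φ n) x y * (w x * w y)) atTop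
            (𝓝 (∑ x, ∑ y, A x y * (w x * w y))) := by
          refine tendsto_finset_sum _ fun x _ => tendsto_finset_sum _ fun y _ => ?_
          exact (hent x y).mul tendsto_const_nhds
        refine ge_of_tendsto' hlimq fun n => ?_
        have hq := (hXpsd (φ n)).dotProduct_mulVec_nonneg w
        rw [hs, dot_mulVec_expand] at hq
        exact hq
    have hAtr : A.trace = 1 := by
      refine tendsto_nhds_unique ?_ (htr.comp hφt)
      simp only [Matrix.trace, Matrix.diag, Function.comp_def]
      exact tendsto_finset_sum _ fun x _ => hent x x
    have hAe : ∀ x y, (extBipDouble G).Adj x y → A x y = 0 := by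
      intro x y hxy
      have h1 : Tendsto (fun n => if (extBipDouble G).Adj x y then Xs (φ n) x y else 0) atTop
          (𝓝 (0 : ℝ)) := by
        have h2 := hmask.comp hφt
        have h3 := tendsto_pi_nhds.mp h2 x
        have h4 := tendsto_pi_nhds.mp h3 y
        simpa [Function.comp_def] using h4
      simp only [if_pos hxy] at h1
      exact tendsto_nhds_unique (hent x y) h1
    have hAval : ip C A = h + ε := by
      refine tendsto_nhds_unique ?_ (hval.comp hφt)
      simp only [ip, Function.comp_def]
      exact tendsto_finset_sum _ fun x _ => tendsto_finset_sum _ fun y _ =>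
        tendsto_const_nhds.mul (hent x y)
    have hle := hub A hApsd hAtr hAe
    rw [hAval] at hle
    linarith
  -- U is convex
  have hUconv : Convex ℝ U := by
    rintro x ⟨X, hX, rfl⟩ y ⟨Y, hY, rfl⟩ s t hs ht hst
    refine ⟨s • X + t • Y, ((psd_smul hX hs).add (psd_smul hY ht)), ?_⟩
    simp only [he]
    refine Prod.ext ?_ (Prod.ext ?_ ?_)
    · simp only [Prod.fst_add, Prod.smul_fst, smul_eq_mul, Matrix.trace_add, Matrix.trace_smul]
      show s • X.trace + t • Y.trace - 1 = s * (X.trace - 1) + t * (Y.trace - 1)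
      simp only [smul_eq_mul]
      linear_combination hst
    · funext a b
      simp only [Prod.snd_add, Prod.fst_add, Prod.smul_snd, Prod.smul_fst, Pi.add_apply,
        Pi.smul_apply, smul_eq_mul, Matrix.add_apply, Matrix.smul_apply]
      by_cases hab : (extBipDouble G).Adj a b <;> simp [hab]
    · simp only [Prod.snd_add, Prod.smul_snd, smul_eq_mul]
      show ip C (s • X + t • Y) = s * ip C X + t * ip C Y
      simp only [ip, Matrix.add_apply, Matrix.smul_apply, smul_eq_mul, Finset.mul_sum,
        ← Finset.sum_add_distrib]
      exact Finset.sum_congr rfl fun a _ => Finset.sum_congr rfl fun b _ => by ring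
  obtain ⟨f, u, hfU, hfp⟩ := geometric_hahn_banach_closed_point
    hUconv.closure isClosed_closure hpcl
  -- decompose f
  set al : ℝ := f (1, 0, 0) with hal
  set be : ℝ := f (0, 0, 1) with hbe
  set eunit : (V ⊕ V) → (V ⊕ V) → ((V ⊕ V) → (V ⊕ V) → ℝ) := fun x y =>
    fun a b => (if a = x then 1 else 0) * (if b = y then 1 else 0) with heunit
  set Wm : (V ⊕ V) → (V ⊕ V) → ℝ := fun x y => f (0, eunit x y, 0) with hWm
  have hdecomp : ∀ (t : ℝ) (Y : (V ⊕ V) → (V ⊕ V) → ℝ) (v : ℝ),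
      f (t, Y, v) = t * al + (∑ x, ∑ y, Y x y * Wm x y) + v * be := by
    intro t Y v
    have hsum : ((0:ℝ), Y, (0:ℝ))
        = ∑ x, ∑ y, Y x y • ((0:ℝ), eunit x y, (0:ℝ)) := by
      refine Prod.ext ?_ (Prod.ext ?_ ?_)
      · simp [Prod.fst_sum, Prod.snd_sum]
      · funext a b
        simp only [Prod.snd_sum, Prod.fst_sum, Prod.smul_mk, smul_eq_mul]
        rw [Finset.sum_apply]
        simp only [Finset.sum_apply, Pi.smul_apply, smul_eq_mul, heunit]
        simp [mul_ite, ite_mul, Finset.sum_ite_eq', Finset.sum_ite_eq]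
      · simp [Prod.fst_sum, Prod.snd_sum]
    have hsplit : ((t:ℝ), Y, v) = t • ((1:ℝ), (0 : (V ⊕ V) → (V ⊕ V) → ℝ), (0:ℝ))
        + ((0:ℝ), Y, (0:ℝ)) + v • ((0:ℝ), (0 : (V ⊕ V) → (V ⊕ V) → ℝ), (1:ℝ)) := by
      refine Prod.ext ?_ (Prod.ext ?_ ?_) <;> simp
    rw [hsplit, _root_.map_add, _root_.map_add, f.map_smul, f.map_smul, hsum]
    simp only [_root_.map_sum, f.map_smul, smul_eq_mul]
    rfl
  have hUle : ∀ X : Matrix (V ⊕ V) (V ⊕ V) ℝ, X.PosSemidef → f (e X) < u :=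
    fun X hX => hfU _ (subset_closure ⟨X, hX, rfl⟩)
  set K : Matrix (V ⊕ V) (V ⊕ V) ℝ := Matrix.of fun x y =>
    (if (extBipDouble G).Adj x y then Wm x y else 0) + be * C x y with hK
  have hKapp : ∀ x y, K x y = (if (extBipDouble G).Adj x y then Wm x y else 0) + be * C x y :=
    fun x y => rfl
  have hfe : ∀ X : Matrix (V ⊕ V) (V ⊕ V) ℝ, f (e X) = al * X.trace + ip K X - al := by
    intro X
    show f (X.trace - 1, (fun x y => if (extBipDouble G).Adj x y then X x y else 0), ip C X) = _
    rw [hdecomp]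
    have h1 : ip K X = (∑ x, ∑ y, (if (extBipDouble G).Adj x y then X x y else 0) * Wm x y)
        + be * ip C X := by
      simp only [ip, hKapp, Finset.mul_sum, ← Finset.sum_add_distrib]
      refine Finset.sum_congr rfl fun x _ => ?_
      refine Finset.sum_congr rfl fun y _ => ?_
      by_cases hxy : (extBipDouble G).Adj x y
      · simp only [if_pos hxy]; ring
      · simp only [if_neg hxy]; ring
    rw [h1]
    ring
  have hL : ∀ X : Matrix (V ⊕ V) (V ⊕ V) ℝ, X.PosSemidef → al * X.trace + ip K X ≤ 0 := by
    intro X hX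
    by_contra hpos
    push_neg at hpos
    set L := al * X.trace + ip K X with hLdef
    set s := (|u| + |al| + 1) / L with hsdef
    have hs : 0 ≤ s := div_nonneg (by positivity) hpos.le
    have h2 := hUle (s • X) (psd_smul hX hs)
    rw [hfe] at h2
    have h3 : al * (s • X).trace + ip K (s • X) = s * L := by
      rw [Matrix.trace_smul, ip_smul_right, hLdef]
      simp only [smul_eq_mul]
      ring
    rw [h3, hsdef, div_mul_cancel₀ _ (ne_of_gt hpos)] at h2
    have h4 := le_abs_self u
    have h5 := le_abs_self al
    linarith
  -- basic consequences
  have hcard : (0:ℝ) < (Fintype.card (V ⊕ V) : ℝ) := by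
    have := Fintype.card_pos (α := V ⊕ V)
    exact_mod_cast this
  have hKdiag : ∀ x, K x x = 0 := by
    intro x
    rw [hKapp, if_neg (SimpleGraph.irrefl _), hCdef, Cmat_diag', mul_zero, zero_add]
  have hXhat : ((Fintype.card (V ⊕ V) : ℝ)⁻¹ • (1 : Matrix (V ⊕ V) (V ⊕ V) ℝ)).PosSemidef :=
    psd_smul Matrix.PosSemidef.one (inv_nonneg.mpr hcard.le)
  have hiphat : ip K ((Fintype.card (V ⊕ V) : ℝ)⁻¹ • (1 : Matrix (V ⊕ V) (V ⊕ V) ℝ)) = 0 := by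
    rw [ip_smul_right]
    have : ip K (1 : Matrix (V ⊕ V) (V ⊕ V) ℝ) = ∑ x, K x x := by
      simp [ip, Matrix.one_apply, mul_ite, mul_one, mul_zero, Finset.sum_ite_eq]
    rw [this]
    simp [hKdiag]
  have halle : al ≤ 0 := by
    have h1 := hL _ hXhat
    rw [hiphat, Matrix.trace_smul, Matrix.trace_one] at h1
    have h2 : ((Fintype.card (V ⊕ V) : ℝ)⁻¹ • (Fintype.card (V ⊕ V) : ℝ)) = 1 := by
      rw [smul_eq_mul, inv_mul_cancel₀ (ne_of_gt hcard)]
    rw [h2] at h1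
    linarith
  have hnegalu : -al < u := by
    have h1 := hUle 0 Matrix.PosSemidef.zero
    rw [hfe] at h1
    simpa [ip_zero] using h1
  have hfpval : u < be * (h + ε) := by
    have h1 : f p = be * (h + ε) := by
      show f ((0:ℝ), (0 : (V ⊕ V) → (V ⊕ V) → ℝ), h + ε) = be * (h + ε)
      rw [hdecomp]
      simp [mul_comm]
    rw [h1] at hfp
    exact hfp
  have hbepos : 0 < be := by
    nlinarith [hε, hh0, halle, hnegalu, hfpval]
  have hquadK : ∀ w : (V ⊕ V) → ℝ, al * (w ⬝ᵥ w) + w ⬝ᵥ (K *ᵥ w) ≤ 0 := by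
    intro w
    have h1 := hL (Matrix.of fun x y => w x * w y) (psd_outer w)
    rw [ip_quad, trace_outer] at h1
    exact h1
  -- block structure of K
  have hKll : ∀ i j, K (Sum.inl i) (Sum.inl j) = 0 := by
    intro i j
    rw [hKapp, if_neg (not_adj_ll i j), hCdef, Cmat_ll, mul_zero, zero_add]
  have hKrr : ∀ i j, K (Sum.inr i) (Sum.inr j) = 0 := by
    intro i j
    rw [hKapp, if_neg (not_adj_rr i j), hCdef, Cmat_rr, mul_zero, zero_add]
  set B : Matrix V V ℝ := Matrix.of fun i j =>
    K (Sum.inl i) (Sum.inr j) + K (Sum.inr j) (Sum.inl i) with hB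
  have hBapp : ∀ i j, B i j = K (Sum.inl i) (Sum.inr j) + K (Sum.inr j) (Sum.inl i) :=
    fun i j => rfl
  have hKw : ∀ a b : V → ℝ, (Sum.elim a b) ⬝ᵥ (K *ᵥ Sum.elim a b)
      = ∑ i, ∑ j, B i j * (a i * b j) := by
    intro a b
    rw [dot_mulVec_expand, Fintype.sum_sum_type]
    simp only [Fintype.sum_sum_type, Sum.elim_inl, Sum.elim_inr, hKll, hKrr, zero_mul,
      Finset.sum_const_zero, zero_add, add_zero]
    have hswap : ∑ i, ∑ j, K (Sum.inr i) (Sum.inl j) * (b i * a j)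
        = ∑ i, ∑ j, K (Sum.inr j) (Sum.inl i) * (a i * b j) := by
      rw [Finset.sum_comm]
      exact Finset.sum_congr rfl fun i _ => Finset.sum_congr rfl fun j _ => by ring
    rw [hswap, ← Finset.sum_add_distrib]
    refine Finset.sum_congr rfl fun i _ => ?_
    rw [← Finset.sum_add_distrib]
    refine Finset.sum_congr rfl fun j _ => ?_
    rw [hBapp]
    ring
  have helim : ∀ a b : V → ℝ, (Sum.elim a b) ⬝ᵥ (Sum.elim a b) = a ⬝ᵥ a + b ⬝ᵥ b := by
    intro a b
    rw [dotProduct, Fintype.sum_sum_type]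
    rfl
  have hBbound : ∀ a : V → ℝ, |∑ i, ∑ j, B i j * (a i * a j)| ≤ (-2 * al) * (a ⬝ᵥ a) := by
    intro a
    have h1 := hquadK (Sum.elim a a)
    rw [hKw, helim] at h1
    have h2 := hquadK (Sum.elim a (-a))
    rw [hKw, helim] at h2
    have h3 : ∑ i, ∑ j, B i j * (a i * (-a) j) = -(∑ i, ∑ j, B i j * (a i * a j)) := by
      rw [← Finset.sum_neg_distrib]
      refine Finset.sum_congr rfl fun i _ => ?_
      rw [← Finset.sum_neg_distrib]
      exact Finset.sum_congr rfl fun j _ => by simp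
    have h4 : (-a) ⬝ᵥ (-a) = a ⬝ᵥ a := by simp
    rw [h3, h4] at h2
    rw [abs_le]
    constructor <;> linarith
  set t : ℝ := -al / be with htdef
  have htval : be * t = -al := by
    rw [htdef, mul_div_cancel₀ _ (ne_of_gt hbepos)]
  have ht0 : 0 ≤ t := div_nonneg (by linarith) hbepos.le
  have htlt : t < h + ε := by
    rw [htdef, div_lt_iff₀ hbepos]
    nlinarith [hnegalu, hfpval]
  set M : Matrix V V ℝ := Matrix.of fun i j => (B i j + B j i) / (2 * be) with hM
  have hMapp : ∀ i j, M i j = (B i j + B j i) / (2 * be) := fun i j => rfl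
  have hMherm : M.IsHermitian := by
    ext i j
    rw [Matrix.conjTranspose_apply, star_trivial, hMapp, hMapp, add_comm]
  have hMones : ∀ i j, Gᶜ.Adj i j → M i j = 1 := by
    intro i j hadj
    obtain ⟨hne, hnadj⟩ := (G.compl_adj i j).mp hadj
    obtain ⟨hne', hnadj'⟩ := (G.compl_adj j i).mp hadj.symm
    have hnl : ¬ (extBipDouble G).Adj (Sum.inl i) (Sum.inr j) := by
      rw [adj_lr]; push_neg; exact ⟨hnadj, hne⟩
    have hnr : ¬ (extBipDouble G).Adj (Sum.inr j) (Sum.inl i) := by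
      rw [adj_rl]; push_neg; exact ⟨hnadj, hne⟩
    have hnl' : ¬ (extBipDouble G).Adj (Sum.inl j) (Sum.inr i) := by
      rw [adj_lr]; push_neg; exact ⟨hnadj', hne'⟩
    have hnr' : ¬ (extBipDouble G).Adj (Sum.inr i) (Sum.inl j) := by
      rw [adj_rl]; push_neg; exact ⟨hnadj', hne'⟩
    have hBij : B i j = be := by
      rw [hBapp, hKapp, hKapp, if_neg hnl, if_neg hnr, hCdef, Cmat_lr, Cmat_rl]
      ring
    have hBji : B j i = be := by
      rw [hBapp, hKapp, hKapp, if_neg hnl', if_neg hnr', hCdef, Cmat_lr, Cmat_rl]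
      ring
    rw [hMapp, hBij, hBji]
    field_simp
    ring
  have hMquad : ∀ a : V → ℝ, |a ⬝ᵥ (M *ᵥ a)| ≤ 2 * t * (a ⬝ᵥ a) := by
    intro a
    have hsw : ∑ i, ∑ j, B j i * (a i * a j) = ∑ i, ∑ j, B i j * (a i * a j) := by
      rw [Finset.sum_comm]
      exact Finset.sum_congr rfl fun i _ => Finset.sum_congr rfl fun j _ => by ring
    have hMa : a ⬝ᵥ (M *ᵥ a) = (∑ i, ∑ j, B i j * (a i * a j)) / be := by
      rw [dot_mulVec_expand]
      calc ∑ i, ∑ j, M i j * (a i * a j)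
          = ∑ i, ∑ j, (B i j * (a i * a j) + B j i * (a i * a j)) / (2 * be) := by
            refine Finset.sum_congr rfl fun i _ => Finset.sum_congr rfl fun j _ => ?_
            rw [hMapp]
            ring
        _ = ((∑ i, ∑ j, B i j * (a i * a j)) + ∑ i, ∑ j, B j i * (a i * a j)) / (2 * be) := by
            simp only [add_div, Finset.sum_add_distrib, Finset.sum_div]
        _ = (∑ i, ∑ j, B i j * (a i * a j)) / be := by
            rw [hsw]
            field_simp
            ring
    rw [hMa, abs_div, abs_of_pos hbepos, div_le_iff₀ hbepos]
    calc |∑ i, ∑ j, B i j * (a i * a j)| ≤ (-2 * al) * (a ⬝ᵥ a) := hBbound a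
      _ = 2 * t * (a ⬝ᵥ a) * be := by
          rw [mul_comm (2 * t * (a ⬝ᵥ a)) be]
          rw [show be * (2 * t * (a ⬝ᵥ a)) = 2 * (be * t) * (a ⬝ᵥ a) by ring, htval]
          ring
  -- conclude
  refine ⟨M, hMherm, hMones, fun k => ?_⟩
  have hmv := hMherm.mulVec_eigenvectorBasis k
  have hvv : (⇑(hMherm.eigenvectorBasis k) : V → ℝ) ⬝ᵥ ⇑(hMherm.eigenvectorBasis k) = 1 := by
    have hnorm : ‖hMherm.eigenvectorBasis k‖ = 1 := hMherm.eigenvectorBasis.orthonormal.1 k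
    have h1 : (⇑(hMherm.eigenvectorBasis k) : V → ℝ) ⬝ᵥ ⇑(hMherm.eigenvectorBasis k)
        = ‖hMherm.eigenvectorBasis k‖ ^ 2 := by
      rw [← real_inner_self_eq_norm_sq, PiLp.inner_apply]
      simp only [RCLike.inner_apply, starRingEnd_apply, star_trivial, dotProduct]
    rw [h1, hnorm]
    norm_num
  have hq : (⇑(hMherm.eigenvectorBasis k) : V → ℝ) ⬝ᵥ (M *ᵥ ⇑(hMherm.eigenvectorBasis k))
      = hMherm.eigenvalues k := by
    rw [hmv]
    have h2 : (⇑(hMherm.eigenvectorBasis k) : V → ℝ) ⬝ᵥ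
        (hMherm.eigenvalues k • (⇑(hMherm.eigenvectorBasis k) : V → ℝ))
        = hMherm.eigenvalues k
          * ((⇑(hMherm.eigenvectorBasis k) : V → ℝ) ⬝ᵥ ⇑(hMherm.eigenvectorBasis k)) := by
      simp only [dotProduct, Pi.smul_apply, smul_eq_mul, Finset.mul_sum]
      exact Finset.sum_congr rfl fun i _ => by ring
    rw [h2, hvv, mul_one]
  calc |hMherm.eigenvalues k|
      = |(⇑(hMherm.eigenvectorBasis k) : V → ℝ) ⬝ᵥ (M *ᵥ ⇑(hMherm.eigenvectorBasis k))| := by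
        rw [hq]
    _ ≤ 2 * t * ((⇑(hMherm.eigenvectorBasis k) : V → ℝ) ⬝ᵥ ⇑(hMherm.eigenvectorBasis k)) :=
        hMquad _
    _ = 2 * t := by rw [hvv, mul_one]
    _ ≤ 2 * (h + ε) := by linarith

end Strong

/-- for any graph `G`, `h₁(B₀(G)) = (1/2)·φ(Ḡ)`. -/
theorem stmt12 (G : SimpleGraph V) :
    h1 (extBipDouble G) (leftPart V) = (1/2 : ℝ) * phi Gᶜ := by
  classical
  rcases isEmpty_or_nonempty V with hV | hV
  · -- the empty case
    have h1e : h1 (extBipDouble G) (leftPart V) = 0 := by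
      unfold h1
      have hempty : {x : ℝ | ∃ X : Matrix (V ⊕ V) (V ⊕ V) ℝ, X.PosSemidef ∧ X.trace = 1 ∧
          (∀ i j, (extBipDouble G).Adj i j → X i j = 0) ∧ x = ip (Cmat (leftPart V)) X} = ∅ := by
        ext x
        simp only [Set.mem_setOf_eq, Set.mem_empty_iff_false, iff_false, not_exists]
        rintro X ⟨hX, htr, -, -⟩
        have h0 : X.trace = 0 := by
          simp [Matrix.trace]
        rw [h0] at htr
        exact one_ne_zero htr.symm
      rw [hempty, Real.sSup_empty]
    have hpe : phi Gᶜ = 0 := by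
      unfold phi
      have hset : {x : ℝ | ∃ (M : Matrix V V ℝ) (hM : M.IsHermitian),
          (∀ i j, Gᶜ.Adj i j → M i j = 1) ∧ x = sSup {y : ℝ | ∃ i, y = |hM.eigenvalues i|}}
          = {0} := by
        ext x
        simp only [Set.mem_setOf_eq, Set.mem_singleton_iff]
        constructor
        · rintro ⟨M, hM, -, rfl⟩
          have hemp : {y : ℝ | ∃ i, y = |hM.eigenvalues i|} = ∅ := by
            ext y
            simp only [Set.mem_setOf_eq, Set.mem_empty_iff_false, iff_false, not_exists]
            exact fun i => (hV.false i).elim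
          rw [hemp, Real.sSup_empty]
        · rintro rfl
          refine ⟨0, Matrix.isHermitian_zero, fun i => (hV.false i).elim, ?_⟩
          have hemp : ∀ (hz : (0 : Matrix V V ℝ).IsHermitian),
              {y : ℝ | ∃ i, y = |hz.eigenvalues i|} = ∅ := by
            intro hz
            ext y
            simp only [Set.mem_setOf_eq, Set.mem_empty_iff_false, iff_false, not_exists]
            exact fun i => (hV.false i).elim
          rw [hemp, Real.sSup_empty]
      rw [hset, csInf_singleton]
    rw [h1e, hpe]
    ring
  · -- the main case
    set S : Set ℝ := {x : ℝ | ∃ X : Matrix (V ⊕ V) (V ⊕ V) ℝ, X.PosSemidef ∧ X.trace = 1 ∧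
      (∀ i j, (extBipDouble G).Adj i j → X i j = 0) ∧ x = ip (Cmat (leftPart V)) X} with hSdef
    set P : Set ℝ := {x : ℝ | ∃ (M : Matrix V V ℝ) (hM : M.IsHermitian),
      (∀ i j, Gᶜ.Adj i j → M i j = 1) ∧ x = sSup {y : ℝ | ∃ i, y = |hM.eigenvalues i|}}
      with hPdef
    have hSP : h1 (extBipDouble G) (leftPart V) = sSup S := rfl
    have hPP : phi Gᶜ = sInf P := rfl
    have hcard : (0:ℝ) < (Fintype.card (V ⊕ V) : ℝ) := by
      have := Fintype.card_pos (α := V ⊕ V)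
      exact_mod_cast this
    -- 0 ∈ S
    have h0S : (0:ℝ) ∈ S := by
      refine ⟨(Fintype.card (V ⊕ V) : ℝ)⁻¹ • (1 : Matrix (V ⊕ V) (V ⊕ V) ℝ),
        psd_smul Matrix.PosSemidef.one (inv_nonneg.mpr hcard.le), ?_, ?_, ?_⟩
      · rw [Matrix.trace_smul, Matrix.trace_one, smul_eq_mul,
          inv_mul_cancel₀ (ne_of_gt hcard)]
      · intro i j hadj
        rw [Matrix.smul_apply, Matrix.one_apply_ne hadj.ne, smul_zero]
      · rw [ip_smul_right]
        have : ip (Cmat (leftPart V)) (1 : Matrix (V ⊕ V) (V ⊕ V) ℝ)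
            = ∑ x, Cmat (leftPart V) x x := by
          simp [ip, Matrix.one_apply, mul_ite, mul_one, mul_zero, Finset.sum_ite_eq]
        rw [this]
        simp [Cmat_diag']
    -- S is bounded above
    have hbdd : BddAbove S := by
      refine ⟨(Fintype.card (V ⊕ V) : ℝ) ^ 2, fun x hx => ?_⟩
      obtain ⟨X, hX, htr, -, rfl⟩ := hx
      have hb : ∀ x y : V ⊕ V, Cmat (leftPart V) x y * X x y ≤ 1 := by
        intro x y
        have h1 : |X x y| ≤ 1 := htr ▸ psd_entry_abs_le_trace hX x y
        have h2 : |Cmat (leftPart V) x y| ≤ 1 := by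
          rw [Cmat]
          by_cases hxy : (x ∈ leftPart V ↔ y ∈ leftPart V)
          · simp [hxy]
          · simp only [Matrix.of_apply, if_neg hxy]
            rw [abs_of_nonneg (by norm_num : (0:ℝ) ≤ 1/2)]
            norm_num
        calc Cmat (leftPart V) x y * X x y ≤ |Cmat (leftPart V) x y * X x y| := le_abs_self _
          _ = |Cmat (leftPart V) x y| * |X x y| := abs_mul _ _
          _ ≤ 1 * 1 := mul_le_mul h2 h1 (abs_nonneg _) zero_le_one
          _ = 1 := mul_one 1
      calc ip (Cmat (leftPart V)) X ≤ ∑ _x : V ⊕ V, ∑ _y : V ⊕ V, (1:ℝ) := by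
            rw [ip]
            exact Finset.sum_le_sum fun x _ => Finset.sum_le_sum fun y _ => hb x y
        _ = (Fintype.card (V ⊕ V) : ℝ) ^ 2 := by
            simp [Finset.sum_const, Finset.card_univ]
            ring
    have hh0 : 0 ≤ sSup S := le_csSup hbdd h0S
    -- P is nonempty
    have hPne : P.Nonempty := by
      refine ⟨_, Matrix.of (fun _ _ => (1:ℝ)), ?_, fun i j _ => rfl, rfl⟩
      ext i j
      simp [Matrix.conjTranspose_apply]
    -- P is bounded below by 0
    have hPlb : ∀ x ∈ P, (0:ℝ) ≤ x := by
      rintro x ⟨M, hM, -, rfl⟩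
      obtain ⟨i0⟩ := hV
      have hbd : BddAbove {y : ℝ | ∃ i, y = |hM.eigenvalues i|} := by
        refine (Set.finite_range fun i => |hM.eigenvalues i|).bddAbove.mono ?_
        rintro y ⟨i, rfl⟩
        exact ⟨i, rfl⟩
      exact (abs_nonneg _).trans (le_csSup hbd ⟨i0, rfl⟩)
    -- weak duality
    have hweak : ∀ x ∈ P, 2 * sSup S ≤ x := by
      rintro x ⟨M, hM, hMe, rfl⟩
      have hbd : BddAbove {y : ℝ | ∃ i, y = |hM.eigenvalues i|} := by
        refine (Set.finite_range fun i => |hM.eigenvalues i|).bddAbove.mono ?_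
        rintro y ⟨i, rfl⟩
        exact ⟨i, rfl⟩
      have hlam : ∀ k, |hM.eigenvalues k| ≤ sSup {y : ℝ | ∃ i, y = |hM.eigenvalues i|} :=
        fun k => le_csSup hbd ⟨k, rfl⟩
      have hsup : sSup S ≤ sSup {y : ℝ | ∃ i, y = |hM.eigenvalues i|} / 2 := by
        refine csSup_le ⟨0, h0S⟩ ?_
        rintro s ⟨X, hX, htr, hXe, rfl⟩
        exact weak_bound G hM hMe hlam hX htr hXe
      linarith
    have hle : sSup S ≤ 1/2 * sInf P := by
      have h2 : 2 * sSup S ≤ sInf P := le_csInf hPne hweak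
      linarith
    -- strong duality
    have hge : sInf P ≤ 2 * sSup S := by
      by_contra hlt
      push_neg at hlt
      set ε : ℝ := (sInf P - 2 * sSup S) / 4 with hεdef
      have hεpos : 0 < ε := by
        rw [hεdef]
        linarith
      obtain ⟨M, hM, hMe, hbound⟩ := strong_bound G (sSup S) ε hh0 hεpos
        (fun X hX htr hXe => le_csSup hbdd ⟨X, hX, htr, hXe, rfl⟩)
      obtain ⟨i0⟩ := hV
      have hmem : sSup {y : ℝ | ∃ i, y = |hM.eigenvalues i|} ∈ P := ⟨M, hM, hMe, rfl⟩
      have h3 : sInf P ≤ sSup {y : ℝ | ∃ i, y = |hM.eigenvalues i|} :=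
        csInf_le ⟨0, hPlb⟩ hmem
      have h4 : sSup {y : ℝ | ∃ i, y = |hM.eigenvalues i|} ≤ 2 * (sSup S + ε) := by
        refine csSup_le ⟨|hM.eigenvalues i0|, i0, rfl⟩ ?_
        rintro y ⟨k, rfl⟩
        have := hbound k
        linarith
      rw [hεdef] at h4
      linarith
    rw [hSP, hPP]
    linarith
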